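/- Fix M > 0, N ∈ ℕ, c_ψ > 0 and j_0 ∈ ℕ. Let ε_1,…,ε_n be independent real random variables with E ε_i = 0 and |ε_i| ≤ M almost surely. Let ψ_{j,k} : ℝ → ℝ (j ≥ j_0, 0 ≤ k < 2^j) be a family of continuously differentiable functions such that the support of ψ_{j,k} is contained in an interval of length N·2^{−j} and ‖ψ_{j,k}‖_∞ ≤ c_ψ·2^{j/2}. Set B_{j,k} = (1/n)·Σ_{i=1}^n ε_i·ψ_{j,k}(i/n). Then there exists a constant C > 0, depending only on M, N and c_ψ, such that for every integer j* with j_0 ≤ j* and 2^{j*} ≤ n, and every η ∈ (0, 1], one has P( 2^{j*+1}·sup_{j_0 ≤ j ≤ j*, 0 ≤ k < 2^j} B_{j,k}² ≥ η² ) ≤ 2^{j*+1}·exp( −C·n·η²·2^{−j*} ). -/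

import Mathlib

open MeasureTheory ProbabilityTheory
open scoped BigOperators

open scoped ENNReal
set_option maxHeartbeats 1000000

section NsbAux
open Real

lemma nsb_aux_sum_two_pow (m : ℕ) : ∑ j ∈ Finset.range m, 2 ^ j ≤ 2 ^ m := by
  induction m with
  | zero => simp
  | succ m ih =>
    rw [Finset.sum_range_succ, pow_succ]
    omega


lemma mgf_le_exp_half_sq {Ω : Type*} [MeasurableSpace Ω] {μ : Measure Ω}
    [IsProbabilityMeasure μ] {X : Ω → ℝ} (hX : Measurable X)
    (hmean : ∫ ω, X ω ∂μ = 0) {b : ℝ} (hb : 0 ≤ b)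
    (habs : ∀ᵐ ω ∂μ, |X ω| ≤ b) (t : ℝ) :
    mgf X μ t ≤ Real.exp (t ^ 2 * b ^ 2 / 2) := by
  rcases hb.eq_or_lt with hb0 | hb0
  · -- b = 0 : X = 0 a.e.
    have hX0 : ∀ᵐ ω ∂μ, X ω = 0 := by
      filter_upwards [habs] with ω h
      rw [← hb0] at h
      exact abs_nonpos_iff.mp h
    have : mgf X μ t = 1 := by
      rw [mgf]
      rw [integral_congr_ae (g := fun _ => (1 : ℝ)) ?_]
      · simp
      · filter_upwards [hX0] with ω h; simp [h]
    rw [this]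
    exact Real.one_le_exp (by positivity)
  · have hXint : Integrable X μ :=
      (integrable_const b).mono' hX.aestronglyMeasurable
        (by filter_upwards [habs] with ω h; simpa [Real.norm_eq_abs] using h)
    have hexp_int : Integrable (fun ω => Real.exp (t * X ω)) μ :=
      (integrable_const (Real.exp (|t| * b))).mono'
        ((hX.const_mul t).exp).aestronglyMeasurable
        (by
          filter_upwards [habs] with ω h
          rw [Real.norm_eq_abs, abs_of_pos (Real.exp_pos _), Real.exp_le_exp]
          calc t * X ω ≤ |t * X ω| := le_abs_self _
            _ = |t| * |X ω| := abs_mul _ _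
            _ ≤ |t| * b := by gcongr)
    set c1 : ℝ := Real.cosh (t * b) with hc1
    set c2 : ℝ := (Real.exp (t * b) - Real.exp (-(t * b))) / (2 * b) with hc2
    have hpt : ∀ᵐ ω ∂μ, Real.exp (t * X ω) ≤ c1 + c2 * X ω := by
      filter_upwards [habs] with ω h
      set x := X ω
      have hxb : -b ≤ x ∧ x ≤ b := abs_le.mp h
      set lam : ℝ := (b + x) / (2 * b) with hlam
      have hl0 : 0 ≤ lam := by
        apply div_nonneg (by linarith [hxb.1]) (by linarith)
      have hl1 : 0 ≤ 1 - lam := by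
        have : lam ≤ 1 := by
          rw [hlam, div_le_one (by linarith)]
          linarith [hxb.2]
        linarith
      have hsum : (1 - lam) + lam = 1 := by ring
      have key := convexOn_exp.2 (Set.mem_univ (-(t * b))) (Set.mem_univ (t * b))
        hl1 hl0 hsum
      simp only [smul_eq_mul] at key
      have harg : (1 - lam) * (-(t * b)) + lam * (t * b) = t * x := by
        rw [hlam]; field_simp; ring
      rw [harg] at key
      calc Real.exp (t * x) ≤ (1 - lam) * Real.exp (-(t * b)) + lam * Real.exp (t * b) := key
        _ = c1 + c2 * x := by
            rw [hc1, hc2, Real.cosh_eq, hlam]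
            field_simp
            ring
    have hrhs_int : Integrable (fun ω => c1 + c2 * X ω) μ :=
      (integrable_const c1).add (hXint.const_mul c2)
    calc mgf X μ t = ∫ ω, Real.exp (t * X ω) ∂μ := rfl
      _ ≤ ∫ ω, c1 + c2 * X ω ∂μ := integral_mono_ae hexp_int hrhs_int hpt
      _ = c1 := by
          rw [integral_add (integrable_const c1) (hXint.const_mul c2),
            integral_const, integral_const_mul, hmean]
          simp
      _ = Real.cosh (t * b) := rfl
      _ ≤ Real.exp ((t * b) ^ 2 / 2) := Real.cosh_le_exp_half_sq _
      _ = Real.exp (t ^ 2 * b ^ 2 / 2) := by ring_nf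

lemma hoeffding_tail {Ω : Type*} [MeasurableSpace Ω] {μ : Measure Ω}
    [IsProbabilityMeasure μ] {n : ℕ} {X : Fin n → Ω → ℝ}
    (hmeas : ∀ i, Measurable (X i))
    (hindep : iIndepFun X μ)
    (hmean : ∀ i, ∫ ω, X i ω ∂μ = 0)
    {b : Fin n → ℝ} (hb : ∀ i, 0 ≤ b i)
    (habs : ∀ i, ∀ᵐ ω ∂μ, |X i ω| ≤ b i)
    {a B : ℝ} (ha : 0 < a) (hB : 0 < B) (hsum : ∑ i, (b i) ^ 2 ≤ B) :
    μ {ω | a ≤ ∑ i, X i ω} ≤ ENNReal.ofReal (Real.exp (-(a ^ 2) / (2 * B))) := by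
  set t : ℝ := a / B with ht
  have ht0 : 0 < t := div_pos ha hB
  have h_int : ∀ i ∈ Finset.univ, Integrable (fun ω => Real.exp (t * X i ω)) μ := by
    intro i _
    refine (integrable_const (Real.exp (|t| * b i))).mono'
      ((hmeas i).const_mul t).exp.aestronglyMeasurable ?_
    filter_upwards [habs i] with ω h
    rw [Real.norm_eq_abs, abs_of_pos (Real.exp_pos _), Real.exp_le_exp]
    calc t * X i ω ≤ |t * X i ω| := le_abs_self _
      _ = |t| * |X i ω| := abs_mul _ _
      _ ≤ |t| * b i := by gcongr
  have hSint : Integrable (fun ω => Real.exp (t * (∑ i, X i) ω)) μ :=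
    hindep.integrable_exp_mul_sum hmeas h_int
  have hcher := measure_ge_le_exp_mul_mgf (X := ∑ i, X i) (μ := μ) a ht0.le hSint
  have hmgf : mgf (∑ i, X i) μ t ≤ Real.exp (t ^ 2 * B / 2) := by
    rw [hindep.mgf_sum hmeas]
    calc ∏ i, mgf (X i) μ t ≤ ∏ i, Real.exp (t ^ 2 * (b i) ^ 2 / 2) := by
          refine Finset.prod_le_prod (fun i _ => mgf_nonneg) (fun i _ => ?_)
          exact mgf_le_exp_half_sq (hmeas i) (hmean i) (hb i) (habs i) t
      _ = Real.exp (∑ i, t ^ 2 * (b i) ^ 2 / 2) := by rw [Real.exp_sum]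
      _ ≤ Real.exp (t ^ 2 * B / 2) := by
          rw [Real.exp_le_exp]
          have : ∑ i, t ^ 2 * (b i) ^ 2 / 2 = t ^ 2 * (∑ i, (b i) ^ 2) / 2 := by
            rw [Finset.mul_sum, Finset.sum_div]
          rw [this]
          have h2 : (0:ℝ) ≤ t ^ 2 := sq_nonneg t
          nlinarith
  have hreal : (μ {ω | a ≤ ∑ i, X i ω}).toReal ≤ Real.exp (-(a ^ 2) / (2 * B)) := by
    have hset : {ω | a ≤ ∑ i, X i ω} = {ω | a ≤ (∑ i, X i) ω} := by
      ext ω; simp [Finset.sum_apply]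
    rw [hset]
    calc (μ {ω | a ≤ (∑ i, X i) ω}).toReal
        ≤ Real.exp (-t * a) * mgf (∑ i, X i) μ t := hcher
      _ ≤ Real.exp (-t * a) * Real.exp (t ^ 2 * B / 2) := by
          gcongr
      _ = Real.exp (-t * a + t ^ 2 * B / 2) := (Real.exp_add _ _).symm
      _ = Real.exp (-(a ^ 2) / (2 * B)) := by
          congr 1
          rw [ht]
          field_simp
          ring
  calc μ {ω | a ≤ ∑ i, X i ω}
      = ENNReal.ofReal (μ {ω | a ≤ ∑ i, X i ω}).toReal :=
        (ENNReal.ofReal_toReal (measure_ne_top _ _)).symm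
    _ ≤ ENNReal.ofReal (Real.exp (-(a ^ 2) / (2 * B))) := ENNReal.ofReal_le_ofReal hreal

lemma card_points_in_interval {n : ℕ} (hn : 1 ≤ n) (A L : ℝ) (hL : 0 ≤ L)
    (T : Finset (Fin n)) (hT : ∀ i ∈ T, ((i : ℕ) + 1 : ℝ) / n ∈ Set.Icc A (A + L)) :
    (T.card : ℝ) ≤ n * L + 1 := by
  have hn0 : (0:ℝ) < n := by exact_mod_cast hn
  set c : ℤ := ⌈(n : ℝ) * A⌉ with hc
  set d : ℤ := ⌊(n : ℝ) * (A + L)⌋ with hd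
  have hcard : T.card ≤ (Finset.Icc c d).card := by
    refine Finset.card_le_card_of_injOn (fun i => ((i : ℕ) : ℤ) + 1) ?_ ?_
    · intro i hi
      obtain ⟨h1, h2⟩ := hT i hi
      rw [Finset.mem_coe, Finset.mem_Icc]
      constructor
      · rw [hc]
        apply Int.ceil_le.mpr
        push_cast
        rw [le_div_iff₀ hn0] at h1
        nlinarith [h1]
      · rw [hd]
        apply Int.le_floor.mpr
        push_cast
        rw [div_le_iff₀ hn0] at h2
        nlinarith [h2]
    · intro i _ i' _ h
      simp only [add_left_inj, Int.natCast_inj] at h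
      exact Fin.ext (by exact_mod_cast h)
  have hIcc : ((Finset.Icc c d).card : ℝ) ≤ n * L + 1 := by
    rw [Int.card_Icc]
    have h1 : (((d + 1 - c).toNat : ℤ) : ℝ) = max ((d + 1 - c : ℤ) : ℝ) 0 := by
      rw [Int.toNat_eq_max]; push_cast; rfl
    have h2 : ((d + 1 - c : ℤ) : ℝ) ≤ n * L + 1 := by
      push_cast
      have hf : ((d : ℤ) : ℝ) ≤ (n : ℝ) * (A + L) := Int.floor_le _
      have hcl : (n : ℝ) * A ≤ ((c : ℤ) : ℝ) := Int.le_ceil _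
      nlinarith
    have h3 : (0:ℝ) ≤ n * L + 1 := by positivity
    calc (((d + 1 - c).toNat : ℤ) : ℝ) = max ((d + 1 - c : ℤ) : ℝ) 0 := h1
      _ ≤ n * L + 1 := max_le h2 h3
  calc (T.card : ℝ) ≤ ((Finset.Icc c d).card : ℝ) := by exact_mod_cast hcard
    _ ≤ n * L + 1 := hIcc

end NsbAux

/-- **Bernstein deviation bound for the supremum of the low-resolution noise
coefficients.** With `B_{j,k} = (1/n)∑ ε_i ψ_{j,k}(i/n)` built from
independent, centered noise variables bounded by `M`, there is `C > 0`
depending only on `M`, `N`, `c_ψ` such that for every `j*` with `j₀ ≤ j*` and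
`2^{j*} ≤ n`, and every `0 < η ≤ 1`,
`P(2^{j*+1}·sup_{j₀ ≤ j ≤ j*, k < 2^j} B_{j,k}² ≥ η²) ≤ 2^{j*+1}·exp(−C·n·η²·2^{−j*})`. -/
theorem noise_sup_bernstein_bound (M cψ : ℝ) (N : ℕ) (hM : 0 < M) (hcψ : 0 < cψ) :
    ∃ C : ℝ, 0 < C ∧
      ∀ (j₀ : ℕ)
        (Ω : Type) (_mΩ : MeasurableSpace Ω) (P : Measure Ω) (_hP : IsProbabilityMeasure P)
        (n : ℕ) (_hn : 1 ≤ n) (ε : Fin n → Ω → ℝ)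
        (_hmeas : ∀ i, Measurable (ε i))
        (_hindep : iIndepFun ε P)
        (_hmean : ∀ i, ∫ ω, ε i ω ∂P = 0)
        (_hbdd : ∀ i, ∀ᵐ ω ∂P, |ε i ω| ≤ M)
        (ψ : ℕ → ℕ → ℝ → ℝ)
        (_hsm : ∀ j, j₀ ≤ j → ∀ k < 2 ^ j, ContDiff ℝ 1 (ψ j k))
        (_hsupp : ∀ j, j₀ ≤ j → ∀ k < 2 ^ j, ∃ a : ℝ,
          ∀ x : ℝ, ψ j k x ≠ 0 → x ∈ Set.Icc a (a + (N : ℝ) * (2 : ℝ) ^ (-(j : ℝ))))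
        (_hψ : ∀ j, j₀ ≤ j → ∀ k < 2 ^ j, ∀ x : ℝ,
          |ψ j k x| ≤ cψ * (2 : ℝ) ^ ((j : ℝ) / 2))
        (js : ℕ) (_hjs : j₀ ≤ js) (_hjsn : 2 ^ js ≤ n)
        (η : ℝ) (_hη0 : 0 < η) (_hη1 : η ≤ 1),
        P {ω | ∃ j, j₀ ≤ j ∧ j ≤ js ∧ ∃ k < 2 ^ j,
              η ^ 2 ≤ (2 : ℝ) ^ (js + 1) *
                ((1 / (n : ℝ)) * ∑ i : Fin n, ε i ω * ψ j k (((i : ℕ) + 1) / (n : ℝ))) ^ 2} ≤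
          ENNReal.ofReal
            ((2 : ℝ) ^ (js + 1) * Real.exp (-C * n * η ^ 2 * (2 : ℝ) ^ (-(js : ℝ)))) := by
  classical
  set K : ℝ := M ^ 2 * cψ ^ 2 * ((N : ℝ) + 1) with hKdef
  have hK : 0 < K := by positivity
  refine ⟨1 / (8 * K), by positivity, ?_⟩
  set C : ℝ := 1 / (8 * K) with hCdef
  have hC : 0 < C := by positivity
  intro j₀ Ω _mΩ P _hP n _hn ε _hmeas _hindep _hmean _hbdd ψ _hsm _hsupp _hψ js _hjs _hjsn
    η _hη0 _hη1
  have hn0 : (0:ℝ) < n := by exact_mod_cast _hn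
  set x : ℝ := (n : ℝ) * η ^ 2 * (2 : ℝ) ^ (-(js : ℝ)) with hxdef
  have hrpowjs : (2 : ℝ) ^ (-(js : ℝ)) = ((2:ℝ) ^ (js : ℕ))⁻¹ := by
    rw [Real.rpow_neg (by norm_num), Real.rpow_natCast]
  have hx : 0 < x := by
    rw [hxdef, hrpowjs]; positivity
  set r : ℝ := (2 : ℝ) ^ (js + 1) with hrdef
  have hr0 : (0:ℝ) < r := by positivity
  set a : ℝ := (n : ℝ) * η / Real.sqrt r with hadef
  have ha : 0 < a := by
    apply div_pos (by positivity) (Real.sqrt_pos.mpr hr0)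
  have haa : a ^ 2 = (n:ℝ) ^ 2 * η ^ 2 / r := by
    rw [hadef, div_pow, mul_pow, Real.sq_sqrt hr0.le]
  set B : ℝ := K * n with hBdef
  have hB : 0 < B := by positivity
  have hE : -(a ^ 2) / (2 * B) = -(2 * C * x) := by
    rw [haa, hxdef, hrpowjs, hCdef, hBdef, hrdef, pow_succ, hKdef]
    have h2js : ((2:ℝ) ^ (js:ℕ)) ≠ 0 := by positivity
    field_simp
    ring
  set e : ℝ := Real.exp (-(a ^ 2) / (2 * B)) with hedef
  have he : e = Real.exp (-(2 * C * x)) := by rw [hedef, hE]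
  -- per-pair bound
  have hpair : ∀ j, j₀ ≤ j → j ≤ js → ∀ k < 2 ^ j,
      P ({ω | a ≤ ∑ i : Fin n, ε i ω * ψ j k (((i : ℕ) + 1) / (n : ℝ))} ∪
         {ω | a ≤ ∑ i : Fin n, ε i ω * (-(ψ j k (((i : ℕ) + 1) / (n : ℝ))))}) ≤
        ENNReal.ofReal (2 * e) := by
    intro j hj1 hj2 k hk
    set c : Fin n → ℝ := fun i => ψ j k (((i : ℕ) + 1) / (n : ℝ)) with hcdef
    -- the common bound
    set b : Fin n → ℝ := fun i => M * |c i| with hbdef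
    have hbnn : ∀ i, 0 ≤ b i := fun i => by positivity
    have hsumb : ∑ i, (b i) ^ 2 ≤ B := by
      have hsq : ∀ i, (c i) ^ 2 ≤ cψ ^ 2 * (2:ℝ) ^ (j:ℕ) := by
        intro i
        have hb1 : |c i| ≤ cψ * (2:ℝ) ^ ((j:ℝ)/2) := _hψ j hj1 k hk _
        have h2 : ((2:ℝ) ^ ((j:ℝ)/2)) ^ 2 = (2:ℝ) ^ (j:ℕ) := by
          rw [← Real.rpow_natCast ((2:ℝ) ^ ((j:ℝ)/2)) 2, ← Real.rpow_mul (by norm_num),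
            ← Real.rpow_natCast (2:ℝ) j]
          norm_num
        calc (c i) ^ 2 = |c i| ^ 2 := (sq_abs _).symm
          _ ≤ (cψ * (2:ℝ) ^ ((j:ℝ)/2)) ^ 2 := by
              apply pow_le_pow_left₀ (abs_nonneg _) hb1
          _ = cψ ^ 2 * (2:ℝ) ^ (j:ℕ) := by rw [mul_pow, h2]
      set L : ℝ := (N : ℝ) * (2 : ℝ) ^ (-(j : ℝ)) with hLdef
      have hL : 0 ≤ L := by
        have : (0:ℝ) < (2 : ℝ) ^ (-(j : ℝ)) := Real.rpow_pos_of_pos (by norm_num) _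
        positivity
      obtain ⟨A, hA⟩ := _hsupp j hj1 k hk
      set T : Finset (Fin n) := Finset.univ.filter (fun i => c i ≠ 0) with hTdef
      have hTcard : (T.card : ℝ) ≤ (n:ℝ) * L + 1 := by
        apply card_points_in_interval _hn A L hL T
        intro i hi
        rw [hTdef, Finset.mem_filter] at hi
        exact hA _ hi.2
      have hsum_filter : ∑ i, (c i) ^ 2 = ∑ i ∈ T, (c i) ^ 2 := by
        rw [hTdef]
        symm
        apply Finset.sum_filter_of_ne
        intro i _ h hc
        exact h (by rw [hc]; ring)
      have hinv : (2:ℝ) ^ (-(j:ℝ)) * (2:ℝ) ^ (j:ℕ) = 1 := by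
        rw [← Real.rpow_natCast (2:ℝ) j, ← Real.rpow_add (by norm_num)]
        simp
      have hpjn : ((2:ℝ) ^ (j:ℕ)) ≤ (n:ℝ) := by
        have h1 : (2:ℕ) ^ j ≤ 2 ^ js := Nat.pow_le_pow_right (by norm_num) hj2
        have h2 : (2:ℕ) ^ j ≤ n := le_trans h1 _hjsn
        exact_mod_cast h2
      have hsc : ∑ i, (c i) ^ 2 ≤ cψ ^ 2 * ((N:ℝ) + 1) * n := by
        calc ∑ i, (c i) ^ 2 = ∑ i ∈ T, (c i) ^ 2 := hsum_filter
          _ ≤ T.card • (cψ ^ 2 * (2:ℝ) ^ (j:ℕ)) :=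
              Finset.sum_le_card_nsmul _ _ _ (fun i _ => hsq i)
          _ = (T.card : ℝ) * (cψ ^ 2 * (2:ℝ) ^ (j:ℕ)) := by rw [nsmul_eq_mul]
          _ ≤ ((n:ℝ) * L + 1) * (cψ ^ 2 * (2:ℝ) ^ (j:ℕ)) := by
              apply mul_le_mul_of_nonneg_right hTcard (by positivity)
          _ = cψ ^ 2 * (((n:ℝ) * N) * ((2:ℝ) ^ (-(j:ℝ)) * (2:ℝ) ^ (j:ℕ)) + (2:ℝ) ^ (j:ℕ)) := by
              rw [hLdef]; ring
          _ = cψ ^ 2 * ((n:ℝ) * N + (2:ℝ) ^ (j:ℕ)) := by rw [hinv]; ring_nf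
          _ ≤ cψ ^ 2 * ((n:ℝ) * N + (n:ℝ)) := by
              apply mul_le_mul_of_nonneg_left (by linarith) (by positivity)
          _ = cψ ^ 2 * ((N:ℝ) + 1) * n := by ring
      calc ∑ i, (b i) ^ 2 = M ^ 2 * ∑ i, (c i) ^ 2 := by
            rw [Finset.mul_sum]
            apply Finset.sum_congr rfl
            intro i _
            rw [hbdef, mul_pow, sq_abs]
          _ ≤ M ^ 2 * (cψ ^ 2 * ((N:ℝ) + 1) * n) := by
            apply mul_le_mul_of_nonneg_left hsc (by positivity)
          _ = B := by rw [hBdef, hKdef]; ring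
    -- tails
    have tail : ∀ (s : Fin n → ℝ), (∀ i, |s i| = |c i|) →
        P {ω | a ≤ ∑ i : Fin n, ε i ω * s i} ≤ ENNReal.ofReal e := by
      intro s hs
      have hXmeas : ∀ i, Measurable (fun ω => ε i ω * s i) :=
        fun i => (_hmeas i).mul_const _
      have hXindep : iIndepFun (fun i ω => ε i ω * s i) P := by
        exact _hindep.comp (fun i (y : ℝ) => y * s i) (fun i => measurable_mul_const _)
      have hXmean : ∀ i, ∫ ω, ε i ω * s i ∂P = 0 := by
        intro i
        rw [integral_mul_const, _hmean i, zero_mul]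
      have hXabs : ∀ i, ∀ᵐ ω ∂P, |ε i ω * s i| ≤ b i := by
        intro i
        filter_upwards [_hbdd i] with ω h
        rw [abs_mul, hs i, hbdef]
        exact mul_le_mul_of_nonneg_right h (abs_nonneg _)
      exact hoeffding_tail hXmeas hXindep hXmean hbnn hXabs ha hB hsumb
    calc P ({ω | a ≤ ∑ i : Fin n, ε i ω * c i} ∪
            {ω | a ≤ ∑ i : Fin n, ε i ω * (-(c i))})
        ≤ P {ω | a ≤ ∑ i : Fin n, ε i ω * c i} +
          P {ω | a ≤ ∑ i : Fin n, ε i ω * (-(c i))} := measure_union_le _ _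
      _ ≤ ENNReal.ofReal e + ENNReal.ofReal e := by
          gcongr
          · exact tail c (fun i => rfl)
          · exact tail (fun i => -(c i)) (fun i => abs_neg _)
      _ = ENNReal.ofReal (2 * e) := by
          rw [← ENNReal.ofReal_add (by positivity) (by positivity)]
          congr 1
          ring
  -- union bound
  set E : Set Ω := {ω | ∃ j, j₀ ≤ j ∧ j ≤ js ∧ ∃ k < 2 ^ j,
      η ^ 2 ≤ (2 : ℝ) ^ (js + 1) *
        ((1 / (n : ℝ)) * ∑ i : Fin n, ε i ω * ψ j k (((i : ℕ) + 1) / (n : ℝ))) ^ 2} with hEdef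
  have hsub : E ⊆ ⋃ j ∈ Finset.Icc j₀ js, ⋃ k ∈ Finset.range (2 ^ j),
      ({ω | a ≤ ∑ i : Fin n, ε i ω * ψ j k (((i : ℕ) + 1) / (n : ℝ))} ∪
       {ω | a ≤ ∑ i : Fin n, ε i ω * (-(ψ j k (((i : ℕ) + 1) / (n : ℝ))))}) := by
    intro ω hω
    obtain ⟨j, hj1, hj2, k, hk, hineq⟩ := hω
    simp only [Set.mem_iUnion]
    refine ⟨j, Finset.mem_Icc.mpr ⟨hj1, hj2⟩, k, Finset.mem_range.mpr hk, ?_⟩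
    set s : ℝ := ∑ i : Fin n, ε i ω * ψ j k (((i : ℕ) + 1) / (n : ℝ)) with hsdef
    have hkey : a ^ 2 ≤ s ^ 2 := by
      have h1 : ((1/(n:ℝ)) * s) ^ 2 = s ^ 2 / (n:ℝ) ^ 2 := by
        field_simp
      rw [h1] at hineq
      rw [haa, div_le_iff₀ hr0]
      have h2 := mul_le_mul_of_nonneg_left hineq (le_of_lt (by positivity : (0:ℝ) < (n:ℝ)^2))
      calc (n:ℝ) ^ 2 * η ^ 2 ≤ (n:ℝ) ^ 2 * ((2:ℝ) ^ (js+1) * (s ^ 2 / (n:ℝ) ^ 2)) := h2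
        _ = s ^ 2 * r := by rw [hrdef]; field_simp
    have habs : a ≤ |s| := by
      have := Real.sqrt_le_sqrt hkey
      rwa [Real.sqrt_sq ha.le, Real.sqrt_sq_eq_abs] at this
    rcases le_abs.mp habs with h | h
    · left; exact h
    · right
      have : ∑ i : Fin n, ε i ω * (-(ψ j k (((i : ℕ) + 1) / (n : ℝ)))) = -s := by
        rw [hsdef, ← Finset.sum_neg_distrib]
        apply Finset.sum_congr rfl
        intro i _
        ring
      rw [Set.mem_setOf_eq, this]
      exact h
  have hsumj : (∑ j ∈ Finset.Icc j₀ js, ((2:ℝ≥0∞) ^ j)) ≤ 2 ^ (js + 1) := by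
    have hnat : ∑ j ∈ Finset.Icc j₀ js, (2:ℕ) ^ j ≤ 2 ^ (js + 1) := by
      have hss : Finset.Icc j₀ js ⊆ Finset.range (js + 1) := by
        intro t ht
        rw [Finset.mem_Icc] at ht
        rw [Finset.mem_range]
        omega
      exact le_trans (Finset.sum_le_sum_of_subset hss) (nsb_aux_sum_two_pow (js + 1))
    calc ∑ j ∈ Finset.Icc j₀ js, ((2:ℝ≥0∞) ^ j)
        = ((∑ j ∈ Finset.Icc j₀ js, (2:ℕ) ^ j : ℕ) : ℝ≥0∞) := by push_cast; rfl
      _ ≤ (((2:ℕ) ^ (js + 1) : ℕ) : ℝ≥0∞) := by exact_mod_cast hnat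
      _ = 2 ^ (js + 1) := by push_cast; rfl
  have hmain : P E ≤ ENNReal.ofReal ((2:ℝ) ^ (js + 1) * (2 * e)) := by
    calc P E ≤ P (⋃ j ∈ Finset.Icc j₀ js, ⋃ k ∈ Finset.range (2 ^ j),
          ({ω | a ≤ ∑ i : Fin n, ε i ω * ψ j k (((i : ℕ) + 1) / (n : ℝ))} ∪
           {ω | a ≤ ∑ i : Fin n, ε i ω * (-(ψ j k (((i : ℕ) + 1) / (n : ℝ))))})) :=
        measure_mono hsub
      _ ≤ ∑ j ∈ Finset.Icc j₀ js, P (⋃ k ∈ Finset.range (2 ^ j),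
          ({ω | a ≤ ∑ i : Fin n, ε i ω * ψ j k (((i : ℕ) + 1) / (n : ℝ))} ∪
           {ω | a ≤ ∑ i : Fin n, ε i ω * (-(ψ j k (((i : ℕ) + 1) / (n : ℝ))))})) :=
        measure_biUnion_finset_le _ _
      _ ≤ ∑ j ∈ Finset.Icc j₀ js, ∑ k ∈ Finset.range (2 ^ j), P
          ({ω | a ≤ ∑ i : Fin n, ε i ω * ψ j k (((i : ℕ) + 1) / (n : ℝ))} ∪
           {ω | a ≤ ∑ i : Fin n, ε i ω * (-(ψ j k (((i : ℕ) + 1) / (n : ℝ))))}) :=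
        Finset.sum_le_sum (fun j _ => measure_biUnion_finset_le _ _)
      _ ≤ ∑ j ∈ Finset.Icc j₀ js, ∑ _k ∈ Finset.range (2 ^ j), ENNReal.ofReal (2 * e) := by
          apply Finset.sum_le_sum
          intro j hj
          apply Finset.sum_le_sum
          intro k hk
          rw [Finset.mem_Icc] at hj
          exact hpair j hj.1 hj.2 k (Finset.mem_range.mp hk)
      _ = ∑ j ∈ Finset.Icc j₀ js, ((2:ℝ≥0∞) ^ j) * ENNReal.ofReal (2 * e) := by
          apply Finset.sum_congr rfl
          intro j _
          rw [Finset.sum_const, Finset.card_range, nsmul_eq_mul]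
          push_cast
          rfl
      _ = (∑ j ∈ Finset.Icc j₀ js, ((2:ℝ≥0∞) ^ j)) * ENNReal.ofReal (2 * e) := by
          rw [Finset.sum_mul]
      _ ≤ (2:ℝ≥0∞) ^ (js + 1) * ENNReal.ofReal (2 * e) :=
          mul_le_mul_left hsumj _
      _ = ENNReal.ofReal ((2:ℝ) ^ (js + 1) * (2 * e)) := by
          have h2 : ENNReal.ofReal ((2:ℝ) ^ (js + 1)) = (2:ℝ≥0∞) ^ (js + 1) := by
            rw [ENNReal.ofReal_pow (by norm_num)]
            norm_num
          rw [ENNReal.ofReal_mul (by positivity : (0:ℝ) ≤ (2:ℝ) ^ (js + 1)), h2]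
  have hexp_eq : Real.exp (-C * (n:ℝ) * η ^ 2 * (2 : ℝ) ^ (-(js : ℝ))) =
      Real.exp (-(C * x)) := by
    rw [hxdef]; ring_nf
  rcases le_or_gt (Real.log 2) (C * x) with hcase | hcase
  · refine le_trans hmain (ENNReal.ofReal_le_ofReal ?_)
    rw [hexp_eq]
    have h1 : Real.exp (-(C * x)) ≤ 1 / 2 := by
      have : (1:ℝ)/2 = Real.exp (-(Real.log 2)) := by
        rw [Real.exp_neg, Real.exp_log (by norm_num)]
        norm_num
      rw [this]
      exact Real.exp_le_exp.mpr (by linarith)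
    have h2 : Real.exp (-(2 * C * x)) = Real.exp (-(C * x)) * Real.exp (-(C * x)) := by
      rw [← Real.exp_add]; ring_nf
    have h3 : 2 * e ≤ Real.exp (-(C * x)) := by
      rw [he, h2]
      nlinarith [Real.exp_pos (-(C * x))]
    apply mul_le_mul_of_nonneg_left h3 (by positivity)
  · calc P E ≤ 1 := prob_le_one
      _ ≤ ENNReal.ofReal ((2 : ℝ) ^ (js + 1) *
            Real.exp (-C * n * η ^ 2 * (2 : ℝ) ^ (-(js : ℝ)))) := by
          rw [ENNReal.one_le_ofReal, hexp_eq]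
          have h1 : (1:ℝ)/2 < Real.exp (-(C * x)) := by
            have : (1:ℝ)/2 = Real.exp (-(Real.log 2)) := by
              rw [Real.exp_neg, Real.exp_log (by norm_num)]
              norm_num
            rw [this]
            exact Real.exp_lt_exp.mpr (by linarith)
          have h2 : (1:ℝ) ≤ 2 ^ js := one_le_pow₀ (by norm_num)
          have h3 : (2:ℝ) ^ (js + 1) = 2 * 2 ^ js := by rw [pow_succ]; ring
          nlinarith
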